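/- Let x ∈ D (i.e., Dh(x) is surjective) and let β > β₁(x) := σ₁(Dh(x))·C_λ(x) / (2 σ_min(Dh(x))²). If ∇g(x) = 0, then h(x) = 0 and ∇f(x) = Dh(x)*[λ(x)]; that is, x is a first-order critical point of the problem min f subject to h = 0. -/
import Mathlib


open scoped RealInnerProductSpace ContDiff

noncomputable section

variable {E : Type*} [NormedAddCommGroup E] [InnerProductSpace ℝ E] [FiniteDimensional ℝ E] {m : ℕ}

/-- The least-squares multipliers `λ(x) = (Dh(x) ∘ Dh(x)*)⁻¹ (Dh(x)[∇f(x)]) = (Dh(x)*)† ∇f(x)`.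
(When `Dh(x)` is surjective, `Dh(x) ∘ Dh(x)*` is bijective and `Function.invFun` returns
its genuine inverse applied to `Dh(x)[∇f(x)]`.) -/
def lam (f : E → ℝ) (h : E → EuclideanSpace ℝ (Fin m)) (x : E) : EuclideanSpace ℝ (Fin m) :=
  Function.invFun
    (fun y => fderiv ℝ h x (ContinuousLinearMap.adjoint (fderiv ℝ h x) y))
    (fderiv ℝ h x (gradient f x))

/-- Fletcher's augmented Lagrangian `g(x) = f(x) − ⟪λ(x), h(x)⟫ + β‖h(x)‖²`. -/
def flal (f : E → ℝ) (h : E → EuclideanSpace ℝ (Fin m)) (β : ℝ) (x : E) : ℝ :=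
  f x - ⟪lam f h x, h x⟫ + β * ‖h x‖ ^ 2

/-- The smallest singular value `σ_min(A) = min_{‖y‖=1} ‖A*[y]‖` of a linear map. -/
def sigmaMin (A : E →L[ℝ] EuclideanSpace ℝ (Fin m)) : ℝ :=
  sInf ((fun y => ‖ContinuousLinearMap.adjoint A y‖) '' {y : EuclideanSpace ℝ (Fin m) | ‖y‖ = 1})

/-- `C_λ(x) = ‖Dλ(x)‖`, the operator norm of the derivative of the multipliers. -/
def Clam (f : E → ℝ) (h : E → EuclideanSpace ℝ (Fin m)) (x : E) : ℝ :=
  ‖fderiv ℝ (lam f h) x‖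

/-- `β₁(x) = σ₁(Dh(x))·C_λ(x) / (2σ_min(Dh(x))²)`. -/
def beta1 (f : E → ℝ) (h : E → EuclideanSpace ℝ (Fin m)) (x : E) : ℝ :=
  ‖fderiv ℝ h x‖ * Clam f h x / (2 * sigmaMin (fderiv ℝ h x) ^ 2)

/-- `β₂(x) = C_λ(x)/σ_min(Dh(x))`. -/
def beta2 (f : E → ℝ) (h : E → EuclideanSpace ℝ (Fin m)) (x : E) : ℝ :=
  Clam f h x / sigmaMin (fderiv ℝ h x)

/-- `β₃(x) = 1/σ_min(Dh(x))`. -/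
def beta3 (h : E → EuclideanSpace ℝ (Fin m)) (x : E) : ℝ :=
  1 / sigmaMin (fderiv ℝ h x)

/-! ### Auxiliary material -/

open ContinuousLinearMap

/-- The adjoint, as a real continuous linear map between operator spaces. -/
def adjCLM : (E →L[ℝ] EuclideanSpace ℝ (Fin m)) →L[ℝ] (EuclideanSpace ℝ (Fin m) →L[ℝ] E) :=
  LinearMap.mkContinuous
    { toFun := fun A => adjoint A
      map_add' := fun A B => map_add _ A B
      map_smul' := fun c A => by simp }
    1 (fun A => by
      simp [(adjoint : (E →L[ℝ] EuclideanSpace ℝ (Fin m)) ≃ₗᵢ⋆[ℝ] _).norm_map A])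

/-- `toDual.symm`, as a real continuous linear map. -/
def fromDualCLM : StrongDual ℝ E →L[ℝ] E :=
  LinearMap.mkContinuous
    { toFun := fun p => (InnerProductSpace.toDual ℝ E).symm p
      map_add' := fun p q => map_add _ p q
      map_smul' := fun c p => by simp }
    1 (fun p => by simp)

/-- The Gram operator family `y ↦ Dh(y) ∘ Dh(y)*`. -/
def gram (h : E → EuclideanSpace ℝ (Fin m)) (y : E) :
    EuclideanSpace ℝ (Fin m) →L[ℝ] EuclideanSpace ℝ (Fin m) :=
  (fderiv ℝ h y).comp (adjoint (fderiv ℝ h y))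

theorem adjoint_ker {x : E} (h : E → EuclideanSpace ℝ (Fin m))
    (hsurj : Function.Surjective (fderiv ℝ h x)) :
    ∀ z, adjoint (fderiv ℝ h x) z = 0 → z = 0 := by
  intro z hz
  obtain ⟨v, hv⟩ := hsurj z
  have h1 : ⟪z, z⟫ = ⟪(adjoint (fderiv ℝ h x)) z, v⟫ := by
    rw [ContinuousLinearMap.adjoint_inner_left, hv]
  rw [hz, inner_zero_left] at h1
  exact inner_self_eq_zero.mp h1

theorem gram_bijective (h : E → EuclideanSpace ℝ (Fin m)) {x : E}
    (hsurj : Function.Surjective (fderiv ℝ h x)) :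
    Function.Bijective (gram h x) := by
  set A := fderiv ℝ h x with hA
  have hker : ∀ z, gram h x z = 0 → z = 0 := by
    intro z hz
    have hz' : A ((adjoint A) z) = 0 := hz
    have h3 : ⟪(adjoint A) z, (adjoint A) z⟫ = ⟪z, A ((adjoint A) z)⟫ :=
      ContinuousLinearMap.adjoint_inner_left A ((adjoint A) z) z
    rw [hz', inner_zero_right] at h3
    exact adjoint_ker h hsurj z (inner_self_eq_zero.mp h3)
  have hinj : Function.Injective (gram h x) := by
    intro a b hab
    have h0 : gram h x (a - b) = 0 := by rw [map_sub, hab, sub_self]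
    exact sub_eq_zero.mp (hker _ h0)
  exact ⟨hinj, LinearMap.injective_iff_surjective.mp hinj⟩

theorem isUnit_gram (h : E → EuclideanSpace ℝ (Fin m)) {x : E}
    (hsurj : Function.Surjective (fderiv ℝ h x)) :
    IsUnit (gram h x) :=
  ContinuousLinearMap.isUnit_iff_bijective.mpr (gram_bijective h hsurj)

theorem lam_eq_of_isUnit (f : E → ℝ) (h : E → EuclideanSpace ℝ (Fin m)) {y : E}
    (hy : IsUnit (gram h y)) :
    lam f h y = Ring.inverse (gram h y) (fderiv ℝ h y (gradient f y)) := by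
  have hbij := ContinuousLinearMap.isUnit_iff_bijective.mp hy
  set w := fderiv ℝ h y (gradient f y)
  have hfun : (fun z => fderiv ℝ h y (ContinuousLinearMap.adjoint (fderiv ℝ h y) z))
      = ⇑(gram h y) := rfl
  have hGu : gram h y (Ring.inverse (gram h y) w) = w := by
    have hm := Ring.mul_inverse_cancel (gram h y) hy
    calc gram h y (Ring.inverse (gram h y) w)
        = (gram h y * Ring.inverse (gram h y)) w := rfl
      _ = w := by rw [hm]; rfl
  show Function.invFun (fun z => fderiv ℝ h y (ContinuousLinearMap.adjoint (fderiv ℝ h y) z)) w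
      = Ring.inverse (gram h y) w
  rw [hfun]
  conv_lhs => rw [← hGu]
  exact Function.leftInverse_invFun hbij.injective _

theorem gram_differentiable (h : E → EuclideanSpace ℝ (Fin m)) (hh : ContDiff ℝ ∞ h) :
    Differentiable ℝ (gram h) := by
  have hA : Differentiable ℝ (fderiv ℝ h) :=
    (hh.fderiv_right (m := ∞) le_rfl).differentiable (by norm_num)
  have hadj : Differentiable ℝ (fun y => adjoint (fderiv ℝ h y)) := by
    have heq : (fun y => adjoint (fderiv ℝ h y)) = fun y => adjCLM (fderiv ℝ h y) := rfl
    rw [heq]; exact adjCLM.differentiable.comp hA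
  exact hA.clm_comp hadj

theorem lam_differentiableAt (f : E → ℝ) (h : E → EuclideanSpace ℝ (Fin m))
    (hf : ContDiff ℝ ∞ f) (hh : ContDiff ℝ ∞ h) {x : E}
    (hsurj : Function.Surjective (fderiv ℝ h x)) : DifferentiableAt ℝ (lam f h) x := by
  have hA : Differentiable ℝ (fderiv ℝ h) :=
    (hh.fderiv_right (m := ∞) le_rfl).differentiable (by norm_num)
  have hgrad : Differentiable ℝ (gradient f) := by
    have heq : gradient f = fun y => fromDualCLM ((fderiv ℝ f y) : StrongDual ℝ E) := rfl
    rw [heq]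
    exact (fromDualCLM.differentiable).comp
      ((hf.fderiv_right (m := ∞) le_rfl).differentiable (by norm_num))
  have hG := gram_differentiable h hh
  have hU : IsOpen {y : E | IsUnit (gram h y)} :=
    Units.isOpen.preimage hG.continuous
  have hxU : x ∈ {y : E | IsUnit (gram h y)} := isUnit_gram h hsurj
  have halt : DifferentiableAt ℝ
      (fun y => Ring.inverse (gram h y) (fderiv ℝ h y (gradient f y))) x :=
    ((hG.differentiableAt.inverse hxU).clm_apply
      (hA.differentiableAt.clm_apply hgrad.differentiableAt))
  refine halt.congr_of_eventuallyEq ?_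
  filter_upwards [hU.mem_nhds hxU] with y hy
  exact lam_eq_of_isUnit f h hy

theorem gram_lam (f : E → ℝ) (h : E → EuclideanSpace ℝ (Fin m)) {x : E}
    (hsurj : Function.Surjective (fderiv ℝ h x)) :
    fderiv ℝ h x (adjoint (fderiv ℝ h x) (lam f h x)) = fderiv ℝ h x (gradient f x) := by
  have hsurjG := (gram_bijective h hsurj).2
  exact Function.invFun_eq (hsurjG (fderiv ℝ h x (gradient f x)))

theorem sigmaMin_nonneg (A : E →L[ℝ] EuclideanSpace ℝ (Fin m)) : 0 ≤ sigmaMin A :=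
  Real.sInf_nonneg (by rintro t ⟨y, -, rfl⟩; exact norm_nonneg _)

theorem sigmaMin_mul_norm_le (A : E →L[ℝ] EuclideanSpace ℝ (Fin m))
    (y : EuclideanSpace ℝ (Fin m)) : sigmaMin A * ‖y‖ ≤ ‖adjoint A y‖ := by
  rcases eq_or_ne y 0 with rfl | hy
  · simp
  · have hny : (0:ℝ) < ‖y‖ := norm_pos_iff.mpr hy
    have hmem : ‖y‖⁻¹ * ‖adjoint A y‖ ∈
        ((fun y => ‖adjoint A y‖) '' {y : EuclideanSpace ℝ (Fin m) | ‖y‖ = 1}) := by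
      refine ⟨‖y‖⁻¹ • y, ?_, ?_⟩
      · simp [norm_smul, abs_of_pos (inv_pos.mpr hny), inv_mul_cancel₀ hny.ne']
      · simp [map_smul, norm_smul, abs_of_pos (inv_pos.mpr hny)]
    have hbdd : BddBelow ((fun y => ‖adjoint A y‖) ''
        {y : EuclideanSpace ℝ (Fin m) | ‖y‖ = 1}) :=
      ⟨0, by rintro t ⟨z, -, rfl⟩; exact norm_nonneg _⟩
    have hle := csInf_le hbdd hmem
    calc sigmaMin A * ‖y‖ ≤ (‖y‖⁻¹ * ‖adjoint A y‖) * ‖y‖ :=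
          mul_le_mul_of_nonneg_right hle hny.le
      _ = ‖adjoint A y‖ := by field_simp

theorem sigmaMin_pos (A : E →L[ℝ] EuclideanSpace ℝ (Fin m))
    [Nontrivial (EuclideanSpace ℝ (Fin m))]
    (hinj : ∀ z, adjoint A z = 0 → z = 0) : 0 < sigmaMin A := by
  set S : Set (EuclideanSpace ℝ (Fin m)) := {y | ‖y‖ = 1} with hS
  have hSeq : S = Metric.sphere (0 : EuclideanSpace ℝ (Fin m)) 1 := by
    ext y; simp [hS, mem_sphere_zero_iff_norm]
  have hScpt : IsCompact S := hSeq ▸ isCompact_sphere 0 1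
  have hSne : S.Nonempty := hSeq ▸ NormedSpace.sphere_nonempty.mpr zero_le_one
  have hcont : Continuous fun y => ‖adjoint A y‖ := (adjoint A).continuous.norm
  have himg : IsCompact ((fun y => ‖adjoint A y‖) '' S) := hScpt.image hcont
  have hne : ((fun y => ‖adjoint A y‖) '' S).Nonempty := hSne.image _
  obtain ⟨y₀, hy₀S, hy₀⟩ := himg.sInf_mem hne
  rw [show sigmaMin A = sInf ((fun y => ‖adjoint A y‖) '' S) from rfl, ← hy₀]
  have hy₀ne : y₀ ≠ 0 := by
    intro h0; rw [h0] at hy₀S; simp [hS] at hy₀S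
  exact norm_pos_iff.mpr fun hz => hy₀ne (hinj _ hz)

/-! ### Main theorem -/

set_option maxHeartbeats 1000000 in

/-- If `Dh(x)` is surjective, `β > β₁(x)`, and `∇g(x) = 0` for Fletcher's augmented
Lagrangian `g`, then `x` is a first-order critical point of `min f s.t. h = 0`:
`h(x) = 0` and `∇f(x) = Dh(x)*[λ(x)]`. -/
theorem critical_point_of_fletcher_is_critical_point_of_problem
    (f : E → ℝ) (h : E → EuclideanSpace ℝ (Fin m))
    (hf : ContDiff ℝ ∞ f) (hh : ContDiff ℝ ∞ h)
    (x : E) (hsurj : Function.Surjective (fderiv ℝ h x))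
    (β : ℝ) (hβ : β > beta1 f h x)
    (hcrit : gradient (flal f h β) x = 0) :
    h x = 0 ∧ gradient f x = ContinuousLinearMap.adjoint (fderiv ℝ h x) (lam f h x) := by
  set A := fderiv ℝ h x with hAdef
  set L := fderiv ℝ (lam f h) x with hLdef
  set lx := lam f h x with hlxdef
  set hx := h x with hhxdef
  set gx := gradient f x with hgxdef
  -- derivative of flal
  have hdf : HasFDerivAt f (fderiv ℝ f x) x := (hf.differentiable (by norm_num) x).hasFDerivAt
  have hdh : HasFDerivAt h A x := (hh.differentiable (by norm_num) x).hasFDerivAt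
  have hdl : HasFDerivAt (lam f h) L x :=
    (lam_differentiableAt f h hf hh hsurj).hasFDerivAt
  have h1 := hdl.inner ℝ hdh
  have h2 := hdh.norm_sq
  have h3 := (hdf.sub h1).add (h2.const_mul β)
  have hflal : HasFDerivAt (flal f h β)
      (fderiv ℝ f x - ((fderivInnerCLM ℝ (lx, hx)).comp (L.prod A))
        + β • (2 • (innerSL ℝ hx).comp A)) x := h3
  -- the gradient condition gives that the fderiv vanishes
  have hf0 : fderiv ℝ (flal f h β) x = 0 := by
    have h4 : (InnerProductSpace.toDual ℝ E).symm (fderiv ℝ (flal f h β) x) = 0 := hcrit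
    rwa [LinearIsometryEquiv.map_eq_zero_iff] at h4
  have hD0 : (fderiv ℝ f x - ((fderivInnerCLM ℝ (lx, hx)).comp (L.prod A))
      + β • (2 • (innerSL ℝ hx).comp A)) = 0 := by
    rw [← hflal.fderiv]; exact hf0
  have hginner : ∀ v : E, fderiv ℝ f x v = ⟪gx, v⟫ := by
    intro v
    rw [hgxdef]
    show fderiv ℝ f x v = ⟪(InnerProductSpace.toDual ℝ E).symm (fderiv ℝ f x), v⟫
    rw [← InnerProductSpace.toDual_apply_apply, LinearIsometryEquiv.apply_symm_apply]
  have hstar : ∀ v : E,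
      ⟪gx, v⟫ - (⟪lx, A v⟫ + ⟪L v, hx⟫) + β * (2 * ⟪hx, A v⟫) = 0 := by
    intro v
    have h5 := ContinuousLinearMap.ext_iff.mp hD0 v
    simp [fderivInnerCLM_apply, hginner v, two_smul, smul_eq_mul] at h5 ⊢
    linarith
  -- key identity A (A* lx) = A gx
  have hkey : A (adjoint A lx) = A gx := gram_lam f h hsurj
  -- step 1 : h x = 0
  have hhx0 : hx = 0 := by
    by_contra hne
    haveI : Nontrivial (EuclideanSpace ℝ (Fin m)) := nontrivial_of_ne hx 0 hne
    set v₀ := adjoint A hx with hv₀def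
    have hstar₀ := hstar v₀
    -- ⟪gx, v₀⟫ = ⟪lx, A v₀⟫
    have hcancel : ⟪gx, v₀⟫ = ⟪lx, A v₀⟫ := by
      have e1 : ⟪gx, v₀⟫ = ⟪hx, A gx⟫ := by
        rw [real_inner_comm, hv₀def, ContinuousLinearMap.adjoint_inner_left]
      have e2 : ⟪lx, A v₀⟫ = ⟪adjoint A lx, v₀⟫ := by
        rw [ContinuousLinearMap.adjoint_inner_left]
      have e3 : ⟪adjoint A lx, v₀⟫ = ⟪hx, A (adjoint A lx)⟫ := by
        rw [hv₀def, real_inner_comm, ContinuousLinearMap.adjoint_inner_left]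
      rw [e1, e2, e3, hkey]
    -- ⟪hx, A v₀⟫ = ‖v₀‖²
    have hsq : ⟪hx, A v₀⟫ = ‖v₀‖ ^ 2 := by
      rw [← ContinuousLinearMap.adjoint_inner_left, ← hv₀def, real_inner_self_eq_norm_sq]
    have hE : 2 * β * ‖v₀‖ ^ 2 = ⟪L v₀, hx⟫ := by
      rw [hcancel, hsq] at hstar₀; linarith
    -- inequalities
    have hnhx : (0:ℝ) < ‖hx‖ := norm_pos_iff.mpr hne
    have hip : ⟪L v₀, hx⟫ ≤ ‖L‖ * ‖v₀‖ * ‖hx‖ :=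
      (real_inner_le_norm _ _).trans
        (mul_le_mul_of_nonneg_right ((L.le_opNorm v₀)) (norm_nonneg _))
    have hv₀le : ‖v₀‖ ≤ ‖A‖ * ‖hx‖ := by
      have := (adjoint A).le_opNorm hx
      rwa [(adjoint : (E →L[ℝ] EuclideanSpace ℝ (Fin m)) ≃ₗᵢ⋆[ℝ] _).norm_map A] at this
    have hsn : sigmaMin A * ‖hx‖ ≤ ‖v₀‖ := sigmaMin_mul_norm_le A hx
    have hspos : 0 < sigmaMin A := sigmaMin_pos A (adjoint_ker h hsurj)
    have hb1 : beta1 f h x = ‖A‖ * ‖L‖ / (2 * sigmaMin A ^ 2) := rfl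
    have hβ2 : ‖A‖ * ‖L‖ < 2 * β * sigmaMin A ^ 2 := by
      rw [hb1] at hβ
      have h2s : (0:ℝ) < 2 * sigmaMin A ^ 2 := by positivity
      calc ‖A‖ * ‖L‖ = ‖A‖ * ‖L‖ / (2 * sigmaMin A ^ 2) * (2 * sigmaMin A ^ 2) := by
            field_simp
        _ < β * (2 * sigmaMin A ^ 2) := by
            exact mul_lt_mul_of_pos_right hβ h2s
        _ = 2 * β * sigmaMin A ^ 2 := by ring
    have hβpos : 0 < β := lt_of_le_of_lt (by
      rw [hb1]; positivity) hβ
    have hLnonneg : (0:ℝ) ≤ ‖L‖ := norm_nonneg _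
    have hv₀nonneg : (0:ℝ) ≤ ‖v₀‖ := norm_nonneg _
    have hk1 : 2 * β * (sigmaMin A * ‖hx‖) ^ 2 ≤ 2 * β * ‖v₀‖ ^ 2 :=
      mul_le_mul_of_nonneg_left (pow_le_pow_left₀ (by positivity) hsn 2) (by positivity)
    have hk2 : ‖L‖ * ‖v₀‖ * ‖hx‖ ≤ ‖L‖ * (‖A‖ * ‖hx‖) * ‖hx‖ :=
      mul_le_mul_of_nonneg_right (mul_le_mul_of_nonneg_left hv₀le hLnonneg) hnhx.le
    have hchain : 2 * β * sigmaMin A ^ 2 * ‖hx‖ ^ 2 ≤ ‖A‖ * ‖L‖ * ‖hx‖ ^ 2 := by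
      calc 2 * β * sigmaMin A ^ 2 * ‖hx‖ ^ 2 = 2 * β * (sigmaMin A * ‖hx‖) ^ 2 := by ring
        _ ≤ 2 * β * ‖v₀‖ ^ 2 := hk1
        _ = ⟪L v₀, hx⟫ := hE
        _ ≤ ‖L‖ * ‖v₀‖ * ‖hx‖ := hip
        _ ≤ ‖L‖ * (‖A‖ * ‖hx‖) * ‖hx‖ := hk2
        _ = ‖A‖ * ‖L‖ * ‖hx‖ ^ 2 := by ring
    have hlt : ‖A‖ * ‖L‖ * ‖hx‖ ^ 2 < 2 * β * sigmaMin A ^ 2 * ‖hx‖ ^ 2 := by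
      have h9 := mul_lt_mul_of_pos_right hβ2 (show (0:ℝ) < ‖hx‖ ^ 2 by positivity)
      linarith
    linarith
  -- step 2 : ∇f = A* λ
  refine ⟨hhx0, ?_⟩
  have hfinal : ∀ v : E, ⟪gx - adjoint A lx, v⟫ = 0 := by
    intro v
    have h6 := hstar v
    rw [hhx0] at h6
    simp only [inner_zero_left, inner_zero_right, mul_zero, add_zero, sub_zero] at h6
    have h7 : ⟪gx, v⟫ = ⟪adjoint A lx, v⟫ := by
      rw [ContinuousLinearMap.adjoint_inner_left]; linarith
    rw [inner_sub_left, h7, sub_self]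
  have h8 := hfinal (gx - adjoint A lx)
  rw [inner_self_eq_zero] at h8
  exact sub_eq_zero.mp h8
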